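/- arXiv:2401.17825 — 2 statements merged into one kernel-verified Lean document; each statement's English description precedes it below -/
import Mathlib

section
/- Let f : ℝ^D → ℝ be C¹ and suppose f(x) = f(U Uᵀ x) for all x ∈ ℝ^D, where U ∈ ℝ^{D×d_e} has orthonormal columns and this representation is minimal (no such representation exists with fewer columns). Then for every vector v ∈ ℝ^D: v is orthogonal to range(U) if and only if ⟨∇f(x), v⟩ = 0 for all x ∈ ℝ^D. -/
open Matrix

theorem stmt_11 {D de : ℕ} (f : EuclideanSpace ℝ (Fin D) → ℝ)
    (hf : ContDiff ℝ 1 f)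
    (U : Matrix (Fin D) (Fin de) ℝ)
    (hU : Uᵀ * U = 1)
    (heff : ∀ x : EuclideanSpace ℝ (Fin D), f x = f (WithLp.toLp 2 (U.mulVec (Uᵀ.mulVec x))))
    (hmin : ∀ (k : ℕ) (V : Matrix (Fin D) (Fin k) ℝ), k < de → Vᵀ * V = 1 →
      ¬ (∀ x : EuclideanSpace ℝ (Fin D), f x = f (WithLp.toLp 2 (V.mulVec (Vᵀ.mulVec x))))) :
    ∀ v : EuclideanSpace ℝ (Fin D),
      Uᵀ.mulVec v = 0 ↔ ∀ x : EuclideanSpace ℝ (Fin D), (inner ℝ (gradient f x) v : ℝ) = 0 := by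
  intro v
  have hdf : Differentiable ℝ f := hf.differentiable one_ne_zero
  have hline : ∀ (x : EuclideanSpace ℝ (Fin D)) (t : ℝ),
      HasDerivAt (fun t : ℝ => x + t • v) v t := by
    intro x t
    simpa using ((hasDerivAt_id t).smul_const v).const_add x
  have hderiv : ∀ (x : EuclideanSpace ℝ (Fin D)) (t : ℝ),
      HasDerivAt (fun t : ℝ => f (x + t • v)) (fderiv ℝ f (x + t • v) v) t := by
    intro x t
    exact (hdf (x + t • v)).hasFDerivAt.comp_hasDerivAt t (hline x t)
  have hgrad : ∀ x : EuclideanSpace ℝ (Fin D),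
      (inner ℝ (gradient f x) v : ℝ) = fderiv ℝ f x v := by
    intro x
    rw [gradient, InnerProductSpace.toDual_symm_apply]
  constructor
  · intro hv x
    have hconst : ∀ t : ℝ, f (x + t • v) = f x := by
      intro t
      calc f (x + t • v) = f (WithLp.toLp 2 (U.mulVec (Uᵀ.mulVec (x + t • v)))) := heff _
        _ = f (WithLp.toLp 2 (U.mulVec (Uᵀ.mulVec x))) := by
            congr 1
            have : Uᵀ.mulVec (x + t • v) = Uᵀ.mulVec x := by
              show Uᵀ.mulVec ((x : Fin D → ℝ) + t • (v : Fin D → ℝ)) = Uᵀ.mulVec x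
              rw [Matrix.mulVec_add, Matrix.mulVec_smul, hv, smul_zero, add_zero]
            rw [this]
        _ = f x := (heff x).symm
    have h1 := hderiv x 0
    rw [funext hconst] at h1
    have h2 : fderiv ℝ f (x + (0:ℝ) • v) v = 0 := h1.unique (hasDerivAt_const 0 (f x))
    rw [hgrad]
    simpa using h2
  · intro h
    by_contra hv
    have hconst : ∀ (x : EuclideanSpace ℝ (Fin D)) (t : ℝ), f (x + t • v) = f x := by
      intro x t
      have hdiff : Differentiable ℝ (fun t : ℝ => f (x + t • v)) :=
        fun t => (hderiv x t).differentiableAt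
      have hzero : ∀ t, deriv (fun t : ℝ => f (x + t • v)) t = 0 := by
        intro t
        rw [(hderiv x t).deriv, ← hgrad, h]
      have := is_const_of_deriv_eq_zero hdiff hzero t 0
      simpa using this
    set u : EuclideanSpace ℝ (Fin de) := WithLp.toLp 2 (Uᵀ.mulVec v) with hu
    have hune : u ≠ 0 := fun h0 => hv (by simpa [hu] using congrArg WithLp.ofLp h0)
    have hde : 0 < de := by
      rcases Nat.eq_zero_or_pos de with h0 | h0
      · subst h0
        exact absurd (by ext i; exact i.elim0) hune
      · exact h0
    have hrank : Module.finrank ℝ ((ℝ ∙ u)ᗮ : Submodule ℝ (EuclideanSpace ℝ (Fin de)))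
        = de - 1 := by
      have h1 : Module.finrank ℝ (ℝ ∙ u) = 1 := finrank_span_singleton hune
      have h2 := Submodule.finrank_add_finrank_orthogonal (K := (ℝ ∙ u))
      rw [h1, finrank_euclideanSpace_fin] at h2
      omega
    set K : Submodule ℝ (EuclideanSpace ℝ (Fin de)) := (ℝ ∙ u)ᗮ with hK
    let b : OrthonormalBasis (Fin (de - 1)) ℝ K :=
      (stdOrthonormalBasis ℝ K).reindex (finCongr hrank)
    set B : Matrix (Fin de) (Fin (de - 1)) ℝ :=
      fun i j => (b j : EuclideanSpace ℝ (Fin de)) i with hB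
    have hBtB : Bᵀ * B = 1 := by
      have hortho := b.orthonormal
      rw [orthonormal_iff_ite] at hortho
      ext j k
      have hjk := hortho j k
      rw [Submodule.coe_inner] at hjk
      simp only [PiLp.inner_apply, RCLike.inner_apply, conj_trivial] at hjk
      simp only [Matrix.mul_apply, Matrix.transpose_apply, Matrix.one_apply, hB]
      show ∑ x, B x j * B x k = (1 : Matrix (Fin (de - 1)) (Fin (de - 1)) ℝ) j k
      rw [Matrix.one_apply, ← hjk]
      exact Finset.sum_congr rfl fun x _ => mul_comm _ _
    set V : Matrix (Fin D) (Fin (de - 1)) ℝ := U * B with hV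
    have hVtV : Vᵀ * V = 1 := by
      rw [hV, Matrix.transpose_mul, Matrix.mul_assoc, ← Matrix.mul_assoc U.transpose, hU,
        Matrix.one_mul, hBtB]
    refine hmin (de - 1) V (by omega) hVtV ?_
    intro x
    set y : EuclideanSpace ℝ (Fin de) := WithLp.toLp 2 (Uᵀ.mulVec x) with hy
    set c : ℝ := (inner ℝ u y : ℝ) / (‖u‖ ^ 2) with hc
    have hproj : B.mulVec (Bᵀ.mulVec y) = WithLp.ofLp (y - c • u) := by
      have hsum : (K.orthogonalProjectionOnto y : EuclideanSpace ℝ (Fin de)) =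
          ∑ j, (inner ℝ ((b j : EuclideanSpace ℝ (Fin de))) y : ℝ) •
            (b j : EuclideanSpace ℝ (Fin de)) := by
        rw [b.orthogonalProjectionOnto_apply_eq_sum]
        push_cast
        rfl
      have hdecomp := Submodule.starProjection_add_starProjection_orthogonal (K := ℝ ∙ u) y
      have hsing : ((ℝ ∙ u).starProjection y) = c • u := by
        rw [Submodule.starProjection_singleton]
        norm_cast
      have hKproj : (K.orthogonalProjectionOnto y : EuclideanSpace ℝ (Fin de)) = y - c • u := by
        have h3 := eq_sub_of_add_eq' hdecomp
        rw [hsing] at h3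
        exact h3
      have happ : ∀ (g : Fin (de - 1) → EuclideanSpace ℝ (Fin de)) (i : Fin de),
          (∑ j, g j) i = ∑ j, g j i := fun g i => by rw [WithLp.ofLp_sum, Finset.sum_apply]
      have hcomp : B.mulVec (Bᵀ.mulVec y) = WithLp.ofLp (
          ∑ j, (inner ℝ ((b j : EuclideanSpace ℝ (Fin de))) y : ℝ) •
            (b j : EuclideanSpace ℝ (Fin de))) := by
        funext i
        rw [happ]
        simp only [Matrix.mulVec, dotProduct, Matrix.transpose_apply, hB,
          PiLp.inner_apply, RCLike.inner_apply, conj_trivial,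
          PiLp.smul_apply, WithLp.ofLp_smul, Pi.smul_apply, smul_eq_mul]
        exact Finset.sum_congr rfl fun j _ => by
          rw [mul_comm]; congr 1; exact Finset.sum_congr rfl fun x _ => mul_comm _ _
      rw [hcomp, hsum.symm, hKproj]
    have key : V.mulVec (Vᵀ.mulVec x) = U.mulVec (y - c • u) := by
      rw [hV, Matrix.transpose_mul, ← Matrix.mulVec_mulVec, ← Matrix.mulVec_mulVec]
      exact congrArg U.mulVec hproj
    rw [key]
    calc f x = f (WithLp.toLp 2 (U.mulVec y)) := heff x
      _ = f ((WithLp.toLp 2 (U.mulVec y)) + (-c) • v) :=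
          (hconst (WithLp.toLp 2 (U.mulVec y)) (-c)).symm
      _ = f (WithLp.toLp 2 (U.mulVec (Uᵀ.mulVec (WithLp.ofLp ((WithLp.toLp 2 (U.mulVec y)) + (-c) • v))))) := heff _
      _ = f (WithLp.toLp 2 (U.mulVec (WithLp.ofLp (y - c • u)))) := by
          congr 1
          have mvadd : ∀ (A : Matrix (Fin de) (Fin D) ℝ) (a b : EuclideanSpace ℝ (Fin D)),
              A.mulVec (a + b) = A.mulVec a + A.mulVec b := fun A a b => Matrix.mulVec_add A a b
          have mvsmul : ∀ (A : Matrix (Fin de) (Fin D) ℝ) (t : ℝ)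
              (a : EuclideanSpace ℝ (Fin D)),
              A.mulVec (t • a) = t • A.mulVec a := fun A t a => Matrix.mulVec_smul A t a
          have h4 : Uᵀ.mulVec (WithLp.ofLp ((WithLp.toLp 2 (U.mulVec y)) + (-c) • v))
              = WithLp.ofLp (y - c • u) := by
            rw [WithLp.ofLp_add, WithLp.ofLp_smul, WithLp.ofLp_toLp, Matrix.mulVec_add,
              Matrix.mulVec_smul, Matrix.mulVec_mulVec, hU, Matrix.one_mulVec]
            funext i
            show y i + (-c) * u i = y i - c * u i
            ring
          rw [h4]
end

section
/- Let A ∈ ℝ^{D×d} be a matrix whose columns span the same subspace as the columns of an orthonormal-column matrix U ∈ ℝ^{D×d_e} (so necessarily d = d_e and A is full column rank), and let f : ℝ^D → ℝ satisfy f(x) = f(U Uᵀ x) for all x. Then for any p ∈ ℝ^D, inf_{y ∈ ℝ^d} f(A y + p) = inf_{x ∈ ℝ^D} f(x). -/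
open Matrix

/-- Identification of `Fin D → ℝ` with `EuclideanSpace ℝ (Fin D)`. -/
noncomputable def toE {D : ℕ} (v : Fin D → ℝ) : EuclideanSpace ℝ (Fin D) :=
  (WithLp.equiv 2 (Fin D → ℝ)).symm v

/-- Identification of `EuclideanSpace ℝ (Fin D)` with `Fin D → ℝ`. -/
noncomputable def ofE {D : ℕ} (v : EuclideanSpace ℝ (Fin D)) : Fin D → ℝ :=
  WithLp.equiv 2 (Fin D → ℝ) v

theorem stmt_14 {D d de : ℕ} (f : EuclideanSpace ℝ (Fin D) → ℝ)
    (U : Matrix (Fin D) (Fin de) ℝ)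
    (hU : Uᵀ * U = 1)
    (heff : ∀ x : EuclideanSpace ℝ (Fin D), f x = f (toE (U.mulVec (Uᵀ.mulVec x))))
    (A : Matrix (Fin D) (Fin d) ℝ)
    (hrange : LinearMap.range (Matrix.toLin' A) = LinearMap.range (Matrix.toLin' U))
    (p : EuclideanSpace ℝ (Fin D)) :
    ⨅ y : Fin d → ℝ, f (toE (A.mulVec y) + p) = ⨅ x : EuclideanSpace ℝ (Fin D), f x := by
  have hrangeset : Set.range (fun y : Fin d → ℝ => f (toE (A.mulVec y) + p))
      = Set.range f := by
    ext z
    constructor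
    · rintro ⟨y, rfl⟩
      exact ⟨_, rfl⟩
    · rintro ⟨x, rfl⟩
      have hmem : U.mulVec (Uᵀ.mulVec (ofE x - ofE p)) ∈
          LinearMap.range (Matrix.toLin' A) := by
        rw [hrange]
        exact ⟨Uᵀ.mulVec (ofE x - ofE p), Matrix.toLin'_apply U _⟩
      obtain ⟨y, hy⟩ := hmem
      rw [Matrix.toLin'_apply] at hy
      refine ⟨y, ?_⟩
      have hfix : Uᵀ.mulVec (A.mulVec y) = Uᵀ.mulVec (ofE x - ofE p) := by
        rw [hy, Matrix.mulVec_mulVec, hU, Matrix.one_mulVec]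
      have key : U.mulVec (Uᵀ.mulVec (A.mulVec y + ofE p))
          = U.mulVec (Uᵀ.mulVec (ofE x)) := by
        rw [Matrix.mulVec_add, hfix, Matrix.mulVec_sub, sub_add_cancel]
      have h1 : f (toE (A.mulVec y) + p)
          = f (toE (U.mulVec (Uᵀ.mulVec (A.mulVec y + ofE p)))) := heff _
      have h2 : f x = f (toE (U.mulVec (Uᵀ.mulVec (ofE x)))) := heff x
      show f (toE (A.mulVec y) + p) = f x
      rw [h1, key, ← h2]
  rw [iInf, iInf, hrangeset]
end
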